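/- Let ω be a normalized continuous 2-cocycle on H, let μ̌ denote the pushforward of μ under the inversion map γ ↦ γ⁻¹, let m, n ∈ ℤ, let F : 𝕋 × H → ℂ be continuous with compact support, and let ξ, ζ : H → ℂ be continuous with compact support. Then the iterated integral ∫_H ∫_𝕋 ∫_H ∫_𝕋 F(s t · ω(γ,η), γη) · s^m · ω(η,η⁻¹)^m · ξ(η⁻¹) · t^n · conj(ζ(γ)) ds dμ(η) dt dμ̌(γ) equals ∫_H ∫_H ( ∫_𝕋 F(s, γη) · s^m ds ) · ξ(η⁻¹) · conj(ζ(γ)) · ω(γη,η⁻¹)^m dμ(η) dμ̌(γ) if m = n, and equals 0 if m ≠ n. Here elements of 𝕋 and values of ω are regarded as complex numbers. -/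

import Mathlib

open MeasureTheory
open scoped ComplexConjugate

noncomputable instance : MeasurableSpace Circle := borel Circle
instance : BorelSpace Circle := ⟨rfl⟩

lemma circle_zpow_integral (τ : Measure Circle) [τ.IsHaarMeasure] [IsProbabilityMeasure τ]
    (k : ℤ) : ∫ t : Circle, (t : ℂ) ^ k ∂τ = if k = 0 then 1 else 0 := by
  split_ifs with hk
  · simp [hk]
  · have hk' : (k : ℂ) ≠ 0 := Int.cast_ne_zero.mpr hk
    set a : Circle := Circle.exp (Real.pi / k) with ha_def
    have ha : (a : ℂ) ^ k = -1 := by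
      rw [ha_def, Circle.coe_exp, ← Complex.exp_int_mul]
      have : (k : ℂ) * (((Real.pi / k : ℝ) : ℂ) * Complex.I) = Real.pi * Complex.I := by
        push_cast; field_simp
      rw [this, Complex.exp_pi_mul_I]
    have h := integral_mul_left_eq_self (μ := τ) (fun t : Circle => (t : ℂ) ^ k) a
    simp only [Circle.coe_mul, mul_zpow, ha, neg_one_mul] at h
    rw [integral_neg] at h
    have h2 : (2 : ℂ) * ∫ t : Circle, (t : ℂ) ^ k ∂τ = 0 := by linear_combination -h
    simpa using mul_eq_zero.mp h2

/-- Let `H` be a locally compact second-countable Hausdorff group with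
left Haar measure `μ`, let `μ̌` be the pushforward of `μ` under inversion, let `τ` be the
normalized Haar probability measure on the circle `𝕋`, and let `ω` be a normalized
continuous 2-cocycle on `H`.  For `m, n ∈ ℤ`, `F : 𝕋 × H → ℂ` continuous with compact
support and `ξ, ζ : H → ℂ` continuous with compact support, the iterated integral
`∫_H ∫_𝕋 ∫_H ∫_𝕋 F (s t ω(γ,η), γη) s^m ω(η,η⁻¹)^m ξ(η⁻¹) t^n conj (ζ γ) ds dμ(η) dt dμ̌(γ)`
equals
`∫_H ∫_H (∫_𝕋 F (s, γη) s^m ds) ξ(η⁻¹) conj (ζ γ) ω(γη,η⁻¹)^m dμ(η) dμ̌(γ)` if `m = n`,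
and equals `0` if `m ≠ n`. -/
theorem leftRegular_matrix_coefficient_decomposition
    {H : Type*} [Group H] [TopologicalSpace H] [IsTopologicalGroup H]
    [LocallyCompactSpace H] [SecondCountableTopology H] [T2Space H]
    [MeasurableSpace H] [BorelSpace H]
    (μ : Measure H) [μ.IsHaarMeasure]
    (τ : Measure Circle) [τ.IsHaarMeasure] [IsProbabilityMeasure τ]
    (ω : H → H → Circle) (hω_cont : Continuous fun p : H × H => ω p.1 p.2)
    (hω_cocycle : ∀ η γ ξ' : H, ω η γ * ω (η * γ) ξ' = ω γ ξ' * ω η (γ * ξ'))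
    (hω_norm : ∀ γ : H, ω 1 γ = 1 ∧ ω γ 1 = 1)
    (m n : ℤ) (F : Circle × H → ℂ) (hF : Continuous F) (hFsupp : HasCompactSupport F)
    (ξ ζ : H → ℂ) (hξ : Continuous ξ) (hξsupp : HasCompactSupport ξ)
    (hζ : Continuous ζ) (hζsupp : HasCompactSupport ζ) :
    (∫ γ, ∫ t : Circle, ∫ η, ∫ s : Circle,
        F (s * t * ω γ η, γ * η) * (s : ℂ) ^ m * (ω η η⁻¹ : ℂ) ^ m * ξ η⁻¹ *
          (t : ℂ) ^ n * conj (ζ γ) ∂τ ∂μ ∂τ ∂(Measure.map (fun γ : H => γ⁻¹) μ)) =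
      if m = n then
        ∫ γ, ∫ η,
          (∫ s : Circle, F (s, γ * η) * (s : ℂ) ^ m ∂τ) * ξ η⁻¹ * conj (ζ γ) *
            (ω (γ * η) η⁻¹ : ℂ) ^ m ∂μ ∂(Measure.map (fun γ : H => γ⁻¹) μ)
      else 0 := by
  have key : ∀ γ : H,
      (∫ t : Circle, ∫ η, ∫ s : Circle,
          F (s * t * ω γ η, γ * η) * (s : ℂ) ^ m * (ω η η⁻¹ : ℂ) ^ m * ξ η⁻¹ *
            (t : ℂ) ^ n * conj (ζ γ) ∂τ ∂μ ∂τ) =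
        (if m = n then (1 : ℂ) else 0) *
          ∫ η, (∫ s : Circle, F (s, γ * η) * (s : ℂ) ^ m ∂τ) * ξ η⁻¹ * conj (ζ γ) *
            (ω (γ * η) η⁻¹ : ℂ) ^ m ∂μ := by
    intro γ
    -- change of variables in the s-integral
    have hs : ∀ (η : H) (c : Circle),
        (∫ s : Circle, F (s * c, γ * η) * (s : ℂ) ^ m ∂τ) =
          (∫ s : Circle, F (s, γ * η) * (s : ℂ) ^ m ∂τ) * ((c : ℂ)⁻¹) ^ m := by
      intro η c
      have h := integral_mul_right_eq_self (μ := τ)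
        (fun u : Circle => F (u, γ * η) * ((u : ℂ) * (c : ℂ)⁻¹) ^ m) c
      have h1 : ∀ s : Circle, ((s * c : Circle) : ℂ) * (c : ℂ)⁻¹ = (s : ℂ) := by
        intro s
        rw [Circle.coe_mul, mul_inv_cancel_right₀ (Circle.coe_ne_zero c)]
      simp only [h1] at h
      rw [h]
      simp only [mul_zpow, ← mul_assoc]
      rw [integral_mul_const]
    -- step 1: fixed t, η: compute the s-integral
    have step1 : ∀ (t : Circle) (η : H),
        (∫ s : Circle, F (s * t * ω γ η, γ * η) * (s : ℂ) ^ m * (ω η η⁻¹ : ℂ) ^ m * ξ η⁻¹ *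
            (t : ℂ) ^ n * conj (ζ γ) ∂τ) =
          (t : ℂ) ^ (n - m) *
            ((∫ s : Circle, F (s, γ * η) * (s : ℂ) ^ m ∂τ) * ξ η⁻¹ * conj (ζ γ) *
              (ω (γ * η) η⁻¹ : ℂ) ^ m) := by
      intro t η
      have hrw : (fun s : Circle =>
          F (s * t * ω γ η, γ * η) * (s : ℂ) ^ m * (ω η η⁻¹ : ℂ) ^ m * ξ η⁻¹ *
            (t : ℂ) ^ n * conj (ζ γ)) =
          fun s : Circle => (F (s * (t * ω γ η), γ * η) * (s : ℂ) ^ m) *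
            ((ω η η⁻¹ : ℂ) ^ m * ξ η⁻¹ * (t : ℂ) ^ n * conj (ζ γ)) := by
        funext s; rw [mul_assoc s t]; ring
      rw [hrw, integral_mul_const, hs η (t * ω γ η)]
      -- cocycle identity
      have hcoc : ω (γ * η) η⁻¹ = (ω γ η)⁻¹ * ω η η⁻¹ := by
        have h := hω_cocycle γ η η⁻¹
        rw [mul_inv_cancel, (hω_norm γ).2, mul_one] at h
        rw [← h]; group
      have hωc : (ω (γ * η) η⁻¹ : ℂ) = ((ω γ η : ℂ))⁻¹ * (ω η η⁻¹ : ℂ) := by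
        rw [hcoc]; push_cast; ring
      rw [hωc]
      have ht : (t : ℂ) ≠ 0 := Circle.coe_ne_zero t
      have hw1 : ((ω γ η : Circle) : ℂ) ≠ 0 := Circle.coe_ne_zero _
      have hw2 : ((ω η η⁻¹ : Circle) : ℂ) ≠ 0 := Circle.coe_ne_zero _
      rw [zpow_sub₀ ht]
      push_cast
      rw [mul_inv, mul_zpow]
      have h1 : (t : ℂ) ^ m ≠ 0 := zpow_ne_zero m ht
      have h2 : ((ω γ η : Circle) : ℂ) ^ m ≠ 0 := zpow_ne_zero m hw1
      field_simp
      rw [div_zpow, div_zpow, div_zpow, one_zpow]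
      linear_combination (∫ s : Circle, F (s, γ * η) * (s : ℂ) ^ m ∂τ) *
        (((ω γ η : Circle) : ℂ) ^ m)⁻¹ * ((ω η η⁻¹ : Circle) : ℂ) ^ m * ξ η⁻¹ * conj (ζ γ) *
        inv_mul_cancel₀ h1
    simp only [step1]
    rw [show (fun t : Circle => ∫ η, (t : ℂ) ^ (n - m) *
        ((∫ s : Circle, F (s, γ * η) * (s : ℂ) ^ m ∂τ) * ξ η⁻¹ * conj (ζ γ) *
          (ω (γ * η) η⁻¹ : ℂ) ^ m) ∂μ) =
        fun t : Circle => (t : ℂ) ^ (n - m) *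
          ∫ η, (∫ s : Circle, F (s, γ * η) * (s : ℂ) ^ m ∂τ) * ξ η⁻¹ * conj (ζ γ) *
            (ω (γ * η) η⁻¹ : ℂ) ^ m ∂μ from funext fun t => integral_const_mul _ _]
    rw [show (∫ t : Circle, (t : ℂ) ^ (n - m) *
        ∫ η, (∫ s : Circle, F (s, γ * η) * (s : ℂ) ^ m ∂τ) * ξ η⁻¹ * conj (ζ γ) *
          (ω (γ * η) η⁻¹ : ℂ) ^ m ∂μ ∂τ) =
        (∫ t : Circle, (t : ℂ) ^ (n - m) ∂τ) *
          ∫ η, (∫ s : Circle, F (s, γ * η) * (s : ℂ) ^ m ∂τ) * ξ η⁻¹ * conj (ζ γ) *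
            (ω (γ * η) η⁻¹ : ℂ) ^ m ∂μ from by
      rw [← integral_mul_const]]
    rw [circle_zpow_integral τ (n - m)]
    congr 1
    simp [sub_eq_zero, eq_comm]
  rw [integral_congr_ae (Filter.Eventually.of_forall key), integral_const_mul]
  split_ifs with h
  · rw [one_mul]
  · rw [zero_mul]
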